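/- Let F₁, F₂ be fusion systems over finite p-groups S₁, S₂. For (S₁,S₂)-pairs (P,ψ) and (P',ψ'), the pair (P',ψ') is (F₁,F₂)-subconjugate to (P,ψ) if and only if the graph Δ(P',ψ') is (F₁ × F₂)-subconjugate to Δ(P,ψ) as subgroups of S₁ × S₂. -/
import Mathlib


/-- A fusion system `F` over a finite `p`-group `S`.  A morphism `P → Q` is recorded as a
homomorphism `↥P →* S` whose image is contained in `Q`. -/
structure FusionSystem (S : Type*) [Group S] where
  Hom : (P : Subgroup S) → Set (↥P →* S)
  inj : ∀ (P : Subgroup S) (φ : ↥P →* S), φ ∈ Hom P → Function.Injective φ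
  conj_mem : ∀ (P : Subgroup S) (g : S), (MulAut.conj g).toMonoidHom.comp P.subtype ∈ Hom P
  comp_mem : ∀ (P Q : Subgroup S) (φ : ↥P →* S) (χ : ↥Q →* S), φ ∈ Hom P → χ ∈ Hom Q →
    ∀ h : ∀ x, φ x ∈ Q, χ.comp (φ.codRestrict Q h) ∈ Hom P
  inv_mem : ∀ (P Q : Subgroup S) (e : ↥P ≃* ↥Q), Q.subtype.comp e.toMonoidHom ∈ Hom P →
    P.subtype.comp e.symm.toMonoidHom ∈ Hom Q

/-- The graph `Δ(P,ψ) = {(u, ψ u) : u ∈ P} ≤ S₁ × S₂` of an `(S₁,S₂)`-pair. -/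
def pairGraph {S₁ S₂ : Type*} [Group S₁] [Group S₂] (P : Subgroup S₁) (ψ : ↥P →* S₂) :
    Subgroup (S₁ × S₂) :=
  (P.subtype.prod ψ).range

/-- The morphism sets of the product fusion system `F₁ × F₂` over `S₁ × S₂`:
`Hom_{F₁×F₂}(R, -)` consists of the restrictions of products `(φ₁, φ₂)` of morphisms
`φᵢ ∈ Hom_{Fᵢ}(Pᵢ, Sᵢ)` to subgroups `R ≤ P₁ × P₂`. -/
def prodHom {S₁ S₂ : Type*} [Group S₁] [Group S₂]
    (F₁ : FusionSystem S₁) (F₂ : FusionSystem S₂) (R : Subgroup (S₁ × S₂)) :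
    Set (↥R →* S₁ × S₂) :=
  {θ | ∃ (P₁ : Subgroup S₁) (P₂ : Subgroup S₂) (φ₁ : ↥P₁ →* S₁) (φ₂ : ↥P₂ →* S₂),
    φ₁ ∈ F₁.Hom P₁ ∧ φ₂ ∈ F₂.Hom P₂ ∧
    ∃ (h₁ : ∀ x : ↥R, (x : S₁ × S₂).1 ∈ P₁) (h₂ : ∀ x : ↥R, (x : S₁ × S₂).2 ∈ P₂),
      ∀ x : ↥R, θ x = (φ₁ ⟨(x : S₁ × S₂).1, h₁ x⟩, φ₂ ⟨(x : S₁ × S₂).2, h₂ x⟩)}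

/-- `(P',ψ')` is `(F₁,F₂)`-subconjugate to `(P,ψ)`: there are `φ₁ ∈ Hom_{F₁}(P',P)` and
`φ₂ ∈ Hom_{F₂}(ψ'(P'), ψ(P))` with `ψ ∘ φ₁ = φ₂ ∘ ψ'` on `P'`. -/
def PairSubconj {S₁ S₂ : Type*} [Group S₁] [Group S₂]
    (F₁ : FusionSystem S₁) (F₂ : FusionSystem S₂)
    (P' : Subgroup S₁) (ψ' : ↥P' →* S₂) (P : Subgroup S₁) (ψ : ↥P →* S₂) : Prop :=
  ∃ φ₁ ∈ F₁.Hom P', ∃ h₁ : ∀ x, φ₁ x ∈ P,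
    ∃ φ₂ ∈ F₂.Hom ψ'.range, (∀ y, φ₂ y ∈ ψ.range) ∧
      ∀ x : ↥P', φ₂ ⟨ψ' x, MonoidHom.mem_range.mpr ⟨x, rfl⟩⟩ = ψ ⟨φ₁ x, h₁ x⟩

/-- Restriction of a morphism in a fusion system to a smaller subgroup is again a morphism. -/
lemma FusionSystem.restrict_mem {S : Type*} [Group S] (F : FusionSystem S)
    (P Q : Subgroup S) (φ : ↥Q →* S) (hφ : φ ∈ F.Hom Q) (h : P ≤ Q) :
    ∃ χ ∈ F.Hom P, ∀ x : ↥P, χ x = φ ⟨x, h x.2⟩ := by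
  set ι : ↥P →* S := (MulAut.conj (1 : S)).toMonoidHom.comp P.subtype with hι
  have hιx : ∀ x : ↥P, ι x = (x : S) := by intro x; simp [hι]
  have hmem : ∀ x : ↥P, ι x ∈ Q := fun x => by rw [hιx]; exact h x.2
  refine ⟨φ.comp (ι.codRestrict Q hmem),
    F.comp_mem P Q ι φ (F.conj_mem P 1) hφ hmem, fun x => ?_⟩
  simp only [MonoidHom.comp_apply, MonoidHom.codRestrict_apply]
  exact congrArg φ (Subtype.ext (hιx x))

/-- An `(S₁,S₂)`-pair `(P',ψ')` is `(F₁,F₂)`-subconjugate to `(P,ψ)` if and only if its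
graph `Δ(P',ψ')` is `(F₁ × F₂)`-subconjugate to `Δ(P,ψ)` in `S₁ × S₂`. -/
theorem stmt14 (p : ℕ) (hp : p.Prime) {S₁ S₂ : Type*} [Group S₁] [Group S₂]
    [Finite S₁] [Finite S₂] (h₁ : IsPGroup p S₁) (h₂ : IsPGroup p S₂)
    (F₁ : FusionSystem S₁) (F₂ : FusionSystem S₂)
    (P : Subgroup S₁) (ψ : ↥P →* S₂) (P' : Subgroup S₁) (ψ' : ↥P' →* S₂) :
    PairSubconj F₁ F₂ P' ψ' P ψ ↔
      ∃ θ ∈ prodHom F₁ F₂ (pairGraph P' ψ'), ∀ x, θ x ∈ pairGraph P ψ := by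
  constructor
  · rintro ⟨φ₁, hφ₁, hP, φ₂, hφ₂, hR, hcomm⟩
    set R : Subgroup (S₁ × S₂) := pairGraph P' ψ' with hRdef
    have hx1 : ∀ x : ↥R, (x : S₁ × S₂).1 ∈ P' := by
      rintro ⟨x, u, rfl⟩; exact u.2
    have hx2 : ∀ x : ↥R, (x : S₁ × S₂).2 ∈ ψ'.range := by
      rintro ⟨x, u, rfl⟩; exact ⟨u, rfl⟩
    set π₁ : ↥R →* S₁ := (MonoidHom.fst S₁ S₂).comp R.subtype
    set π₂ : ↥R →* S₂ := (MonoidHom.snd S₁ S₂).comp R.subtype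
    refine ⟨(φ₁.comp (π₁.codRestrict P' hx1)).prod (φ₂.comp (π₂.codRestrict ψ'.range hx2)),
      ⟨P', ψ'.range, φ₁, φ₂, hφ₁, hφ₂, hx1, hx2, fun x => rfl⟩, ?_⟩
    rintro ⟨x, u, rfl⟩
    refine ⟨⟨φ₁ u, hP u⟩, ?_⟩
    have h2 : φ₂ ⟨((P'.subtype.prod ψ') u).2, hx2 ⟨_, u, rfl⟩⟩ = ψ ⟨φ₁ u, hP u⟩ := hcomm u
    exact Prod.ext rfl h2.symm
  · rintro ⟨θ, ⟨P₁, P₂, φ₁, φ₂, hφ₁, hφ₂, h1, h2, hθ⟩, himg⟩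
    have le₁ : P' ≤ P₁ := fun u hu => h1 ⟨(u, ψ' ⟨u, hu⟩), ⟨u, hu⟩, rfl⟩
    have le₂ : ψ'.range ≤ P₂ := by
      rintro y ⟨u, rfl⟩; exact h2 ⟨(u, ψ' u), u, rfl⟩
    obtain ⟨α, hα, hαeq⟩ := F₁.restrict_mem P' P₁ φ₁ hφ₁ le₁
    obtain ⟨β, hβ, hβeq⟩ := F₂.restrict_mem ψ'.range P₂ φ₂ hφ₂ le₂
    -- key computation for each `u : ↥P'`
    have key : ∀ u : ↥P', α u ∈ P ∧
        ∀ h : α u ∈ P, β ⟨ψ' u, ⟨u, rfl⟩⟩ = ψ ⟨α u, h⟩ := by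
      intro u
      set xu : ↥(pairGraph P' ψ') := ⟨(u, ψ' u), u, rfl⟩ with hxu
      obtain ⟨w, hw⟩ := himg xu
      have hθx := hθ xu
      have hw' : ((w : S₁), ψ w) = θ xu := hw
      rw [hθx] at hw'
      have e1 : (w : S₁) = φ₁ ⟨(u : S₁), h1 xu⟩ := congrArg Prod.fst hw'
      have e2 : ψ w = φ₂ ⟨ψ' u, h2 xu⟩ := congrArg Prod.snd hw'
      have hαu : α u = φ₁ ⟨(u : S₁), h1 xu⟩ := by
        rw [hαeq u]
      have hmemP : α u ∈ P := by rw [hαu, ← e1]; exact w.2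
      refine ⟨hmemP, fun h => ?_⟩
      have hβu : β ⟨ψ' u, ⟨u, rfl⟩⟩ = φ₂ ⟨ψ' u, h2 xu⟩ := hβeq ⟨ψ' u, ⟨u, rfl⟩⟩
      rw [hβu, ← e2]
      exact congrArg ψ (Subtype.ext (show α u = (w:S₁) by rw [hαu, ← e1])).symm
    refine ⟨α, hα, fun u => (key u).1, β, hβ, ?_, fun u => (key u).2 (key u).1⟩
    rintro ⟨y, u, rfl⟩
    have := (key u).2 (key u).1
    exact ⟨⟨α u, (key u).1⟩, this.symm⟩
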